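/- For n ≥ 4, the complete bipartite graph K_{2,n−2} has clustering coefficient 0, and adding an edge between the two vertices of degree n−2 yields a graph with clustering coefficient 1 − 2/n + 4/(n(n−1)). -/

import Mathlib

namespace ClusterCoeff

/-- The degree of a vertex. -/
noncomputable def deg {V : Type*} (G : SimpleGraph V) (u : V) : ℕ :=
  Nat.card (G.neighborSet u)

/-- The number of edges of the subgraph induced by the neighborhood of `u`. -/
noncomputable def nbrE {V : Type*} (G : SimpleGraph V) (u : V) : ℕ :=
  Nat.card {p : G.neighborSet u × G.neighborSet u // G.Adj p.1 p.2} / 2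

/-- The clustering coefficient of the vertex `u`. -/
noncomputable def localCC {V : Type*} (G : SimpleGraph V) (u : V) : ℝ :=
  if 2 ≤ deg G u then (nbrE G u : ℝ) / ((deg G u).choose 2) else 0

/-- The clustering coefficient of the graph `G`. -/
noncomputable def cc {V : Type*} [Fintype V] (G : SimpleGraph V) : ℝ :=
  (∑ u, localCC G u) / (Fintype.card V)

/-- The complete graph on `n` vertices minus the edge between vertices `0` and `1`. -/
def Kminus (n : ℕ) [NeZero n] : SimpleGraph (Fin n) where
  Adj a b := a ≠ b ∧ ¬((a = 0 ∧ b = 1) ∨ (a = 1 ∧ b = 0))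
  symm := by
    constructor
    intro a b h
    obtain ⟨h1, h2⟩ := h
    exact ⟨h1.symm, by tauto⟩
  loopless := by
    constructor
    intro a h
    exact h.1 rfl

/-- The graph obtained from `G` by adding the edge `uv`. -/
def addEdge {V : Type*} (G : SimpleGraph V) (u v : V) : SimpleGraph V where
  Adj a b := a ≠ b ∧ (G.Adj a b ∨ (a = u ∧ b = v) ∨ (a = v ∧ b = u))
  symm := by
    constructor
    intro a b h
    obtain ⟨h1, h2⟩ := h
    refine ⟨h1.symm, ?_⟩
    rcases h2 with h | h | h
    · exact Or.inl h.symm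
    · exact Or.inr (Or.inr ⟨h.2, h.1⟩)
    · exact Or.inr (Or.inl ⟨h.2, h.1⟩)
  loopless := by
    constructor
    intro a h
    exact h.1 rfl

/-- The graph obtained from `G` by deleting the edge `uv`. -/
def delEdge {V : Type*} (G : SimpleGraph V) (u v : V) : SimpleGraph V where
  Adj a b := G.Adj a b ∧ ¬((a = u ∧ b = v) ∨ (a = v ∧ b = u))
  symm := by
    constructor
    intro a b h
    exact ⟨h.1.symm, by tauto⟩
  loopless := by
    constructor
    intro a h
    exact G.loopless.irrefl a h.1

/-- The modified connected caveman graph `G(k,ℓ)`: `ℓ` copies of `K_{k+1} - e` arranged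
cyclically, with one edge between consecutive copies, chosen so that the graph is
`k`-regular (the two degree-deficient vertices `0` and `1` of each copy receive
the connecting edges). -/
def cave (k ℓ : ℕ) : SimpleGraph (ZMod ℓ × Fin (k + 1)) where
  Adj v w := v ≠ w ∧
    ((v.1 = w.1 ∧ v.2 ≠ w.2 ∧ ¬((v.2 = 0 ∧ w.2 = 1) ∨ (v.2 = 1 ∧ w.2 = 0))) ∨
     (w.1 = v.1 + 1 ∧ v.2 = 0 ∧ w.2 = 1) ∨
     (v.1 = w.1 + 1 ∧ w.2 = 0 ∧ v.2 = 1))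
  symm := by
    constructor
    intro v w h
    obtain ⟨h0, h⟩ := h
    refine ⟨h0.symm, ?_⟩
    rcases h with ⟨h1, h2, h3⟩ | ⟨h1, h2, h3⟩ | ⟨h1, h2, h3⟩
    · exact Or.inl ⟨h1.symm, h2.symm, by tauto⟩
    · exact Or.inr (Or.inr ⟨h1, h2, h3⟩)
    · exact Or.inr (Or.inl ⟨h1, h2, h3⟩)
  loopless := by
    constructor
    intro v h
    exact h.1 rfl

lemma card_adj_pairs {V : Type*} (G : SimpleGraph V) (u : V) :
    Nat.card {p : G.neighborSet u × G.neighborSet u // G.Adj p.1 p.2}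
      = {q : V × V | q.1 ∈ G.neighborSet u ∧ q.2 ∈ G.neighborSet u ∧ G.Adj q.1 q.2}.ncard := by
  rw [← Nat.card_coe_set_eq]
  exact Nat.card_congr ⟨fun p => ⟨(p.1.1.1, p.1.2.1), p.1.1.2, p.1.2.2, p.2⟩,
    fun q => ⟨(⟨q.1.1, q.2.1⟩, ⟨q.1.2, q.2.2.1⟩), q.2.2.2⟩, fun _ => rfl, fun _ => rfl⟩

variable {m : ℕ}

abbrev V' (m : ℕ) := Fin 2 ⊕ Fin m
abbrev G0 (m : ℕ) := completeBipartiteGraph (Fin 2) (Fin m)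
abbrev G1 (m : ℕ) := addEdge (G0 m) (Sum.inl 0) (Sum.inl 1)

lemma nbrE_G0 (u : V' m) : nbrE (G0 m) u = 0 := by
  have : IsEmpty {p : (G0 m).neighborSet u × (G0 m).neighborSet u // (G0 m).Adj p.1 p.2} := by
    constructor
    rintro ⟨⟨⟨x, hx⟩, ⟨y, hy⟩⟩, hadj⟩
    simp only [SimpleGraph.mem_neighborSet, completeBipartiteGraph_adj] at hx hy hadj
    rcases u with a | b <;> rcases x with a' | b' <;> rcases y with a'' | b'' <;> simp_all
  unfold nbrE
  rw [Nat.card_of_isEmpty]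

lemma cc_G0 : cc (G0 m) = 0 := by
  have h : ∀ u : V' m, localCC (G0 m) u = 0 := by
    intro u
    simp [localCC, nbrE_G0]
  simp [cc, h]

lemma nbhd_inr (b : Fin m) :
    (G1 m).neighborSet (Sum.inr b) = {Sum.inl 0, Sum.inl 1} := by
  ext x
  rcases x with a | b'
  · simp only [SimpleGraph.mem_neighborSet]
    show (Sum.inr b ≠ Sum.inl a ∧ _) ↔ _
    constructor
    · rintro -
      fin_cases a <;> simp
    · rintro h
      refine ⟨by simp, Or.inl ?_⟩
      simp [completeBipartiteGraph_adj]
  · simp only [SimpleGraph.mem_neighborSet]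
    show (Sum.inr b ≠ Sum.inr b' ∧ _) ↔ _
    simp [completeBipartiteGraph_adj]

lemma nbhd_inl (a : Fin 2) :
    (G1 m).neighborSet (Sum.inl a) = insert (Sum.inl (a + 1)) (Set.range Sum.inr) := by
  ext x
  rcases x with a' | b'
  · simp only [SimpleGraph.mem_neighborSet]
    show (Sum.inl a ≠ Sum.inl a' ∧ ((G0 m).Adj _ _ ∨ _ ∨ _)) ↔ _
    simp only [completeBipartiteGraph_adj]
    fin_cases a <;> fin_cases a' <;> simp
  · simp only [SimpleGraph.mem_neighborSet]
    show (Sum.inl a ≠ Sum.inr b' ∧ ((G0 m).Adj _ _ ∨ _ ∨ _)) ↔ _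
    simp [completeBipartiteGraph_adj]

lemma deg_inr (b : Fin m) : deg (G1 m) (Sum.inr b) = 2 := by
  rw [deg, Nat.card_coe_set_eq, nbhd_inr]
  exact Set.ncard_pair (by simp)

lemma deg_inl (a : Fin 2) : deg (G1 m) (Sum.inl a) = m + 1 := by
  rw [deg, Nat.card_coe_set_eq, nbhd_inl]
  rw [Set.ncard_insert_of_notMem (by simp) (Set.toFinite _)]
  rw [← Nat.card_coe_set_eq, Nat.card_range_of_injective Sum.inr_injective]
  simp

lemma pairs_inr (b : Fin m) :
    {q : V' m × V' m | q.1 ∈ (G1 m).neighborSet (Sum.inr b) ∧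
      q.2 ∈ (G1 m).neighborSet (Sum.inr b) ∧ (G1 m).Adj q.1 q.2}
    = {(Sum.inl 0, Sum.inl 1), (Sum.inl 1, Sum.inl 0)} := by
  ext ⟨x, y⟩
  simp only [Set.mem_setOf_eq, nbhd_inr, Set.mem_insert_iff, Set.mem_singleton_iff,
    Prod.mk.injEq]
  constructor
  · rintro ⟨hx, hy, hadj⟩
    rcases hx with rfl | rfl <;> rcases hy with rfl | rfl
    · exact absurd rfl hadj.1
    · exact Or.inl ⟨rfl, rfl⟩
    · exact Or.inr ⟨rfl, rfl⟩
    · exact absurd rfl hadj.1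
  · rintro (⟨rfl, rfl⟩ | ⟨rfl, rfl⟩)
    · exact ⟨Or.inl rfl, Or.inr rfl, ⟨by simp, Or.inr (Or.inl ⟨rfl, rfl⟩)⟩⟩
    · exact ⟨Or.inr rfl, Or.inl rfl, ⟨by simp, Or.inr (Or.inr ⟨rfl, rfl⟩)⟩⟩

lemma nbrE_inr (b : Fin m) : nbrE (G1 m) (Sum.inr b) = 1 := by
  unfold nbrE
  rw [card_adj_pairs, pairs_inr, Set.ncard_pair (by simp)]

lemma pairs_inl (a : Fin 2) :
    {q : V' m × V' m | q.1 ∈ (G1 m).neighborSet (Sum.inl a) ∧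
      q.2 ∈ (G1 m).neighborSet (Sum.inl a) ∧ (G1 m).Adj q.1 q.2}
    = Set.range (fun b : Fin m => ((Sum.inl (a + 1) : V' m), Sum.inr b))
      ∪ Set.range (fun b : Fin m => ((Sum.inr b : V' m), Sum.inl (a + 1))) := by
  ext ⟨x, y⟩
  simp only [Set.mem_setOf_eq, nbhd_inl, Set.mem_insert_iff, Set.mem_range, Set.mem_union,
    Prod.mk.injEq]
  constructor
  · rintro ⟨hx, hy, hadj⟩
    have hxl : ∀ c : Fin m, x = Sum.inr c → y = Sum.inl (a + 1) := by
      rintro c rfl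
      rcases hy with rfl | ⟨c', rfl⟩
      · rfl
      · exfalso
        rcases hadj.2 with h | h | h
        · simp [completeBipartiteGraph_adj] at h
        · exact absurd h.1 (by simp)
        · exact absurd h.1 (by simp)
    rcases hx with rfl | ⟨c, rfl⟩
    · rcases hy with rfl | ⟨c', rfl⟩
      · exact absurd rfl hadj.1
      · exact Or.inl ⟨c', rfl, rfl⟩
    · exact Or.inr ⟨c, rfl, (hxl c rfl).symm⟩
  · rintro (⟨c, rfl, rfl⟩ | ⟨c, rfl, rfl⟩)
    · exact ⟨Or.inl rfl, Or.inr ⟨c, rfl⟩,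
        ⟨by simp, Or.inl (by simp [completeBipartiteGraph_adj])⟩⟩
    · exact ⟨Or.inr ⟨c, rfl⟩, Or.inl rfl,
        ⟨by simp, Or.inl (by simp [completeBipartiteGraph_adj])⟩⟩

lemma nbrE_inl (a : Fin 2) : nbrE (G1 m) (Sum.inl a) = m := by
  unfold nbrE
  rw [card_adj_pairs, pairs_inl]
  rw [Set.ncard_union_eq ?_ (Set.toFinite _) (Set.toFinite _)]
  · have h1 : (Set.range (fun b : Fin m => (((Sum.inl (a + 1), Sum.inr b)) : V' m × V' m))).ncard = m := by
      rw [← Nat.card_coe_set_eq,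
        Nat.card_range_of_injective (fun b b' h => by simpa using h)]
      simp
    have h2 : (Set.range (fun b : Fin m => (((Sum.inr b, Sum.inl (a + 1))) : V' m × V' m))).ncard = m := by
      rw [← Nat.card_coe_set_eq,
        Nat.card_range_of_injective (fun b b' h => by simpa using h)]
      simp
    rw [h1, h2]
    omega
  · rw [Set.disjoint_left]
    rintro ⟨x, y⟩ ⟨c, h⟩ ⟨c', h'⟩
    simp only [Prod.mk.injEq] at h h'
    rw [← h.1] at h'
    exact absurd h'.1 (by simp)

lemma localCC_inr (b : Fin m) : localCC (G1 m) (Sum.inr b) = 1 := by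
  simp [localCC, deg_inr, nbrE_inr]

lemma localCC_inl (a : Fin 2) (hm : 1 ≤ m) :
    localCC (G1 m) (Sum.inl a) = (m : ℝ) / ((m + 1).choose 2) := by
  rw [localCC, if_pos (by rw [deg_inl]; omega), deg_inl, nbrE_inl]

lemma cc_G1 (hm : 2 ≤ m) :
    cc (G1 m) = 1 - 2 / ((m : ℝ) + 2) + 4 / (((m : ℝ) + 2) * (((m : ℝ) + 2) - 1)) := by
  have hm1 : (1:ℕ) ≤ m := by omega
  rw [cc, Fintype.sum_sum_type]
  simp only [localCC_inr, fun a => localCC_inl a hm1, Finset.sum_const, Finset.card_univ,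
    Fintype.card_fin, nsmul_eq_mul, mul_one]
  have hcard : (Fintype.card (V' m) : ℝ) = (m : ℝ) + 2 := by
    simp [Fintype.card_sum]; ring
  rw [hcard, Nat.cast_choose_two]
  have h0 : (m : ℝ) ≠ 0 := Nat.cast_ne_zero.mpr (by omega)
  have h1 : (m : ℝ) + 1 ≠ 0 := by positivity
  have h2 : (m : ℝ) + 2 ≠ 0 := by positivity
  have h3 : (2:ℝ) + (m:ℝ) * 3 + (m:ℝ) ^ 2 ≠ 0 := by positivity
  push_cast
  field_simp
  ring_nf
  field_simp [h3]
  ring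



/-- For `n ≥ 4`, the complete bipartite graph `K_{2,n-2}` has clustering
coefficient `0`, and adding the edge between the two vertices of degree `n-2` yields a
graph with clustering coefficient `1 - 2/n + 4/(n(n-1))`. -/
theorem completeBipartite_cc (n : ℕ) (hn : 4 ≤ n) :
    cc (completeBipartiteGraph (Fin 2) (Fin (n - 2))) = 0 ∧
      cc (addEdge (completeBipartiteGraph (Fin 2) (Fin (n - 2)))
          (Sum.inl 0) (Sum.inl 1)) =
        1 - 2 / (n : ℝ) + 4 / ((n : ℝ) * ((n : ℝ) - 1)) := by
  obtain ⟨m, rfl⟩ : ∃ m, n = m + 2 := ⟨n - 2, by omega⟩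
  have hm : 2 ≤ m := by omega
  refine ⟨cc_G0, (cc_G1 hm).trans ?_⟩
  push_cast
  ring

end ClusterCoeff
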